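/- Let $s,t \in \mathbb{R}_{\ge 0}^4$ satisfy $s_1 t_1 = s_2 t_2 = s_3 t_3 = s_4 t_4$. Then $A(s,t) = 2\sqrt[4]{s_1 t_2 t_3 s_4} + 2\sqrt[4]{t_1 s_2 s_3 t_4}$. -/

import Mathlib

open Real

noncomputable def Afun (s t : Fin 4 → ℝ) : ℝ :=
  sInf {x : ℝ | ∃ r : ℝ, 0 < r ∧
    x = Real.sqrt ((s 0 / r + t 3 * r) * (s 3 / r + t 0 * r)) +
        Real.sqrt ((s 1 / r + t 2 * r) * (s 2 / r + t 1 * r))}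

lemma pair_sqrt (a b c d r : ℝ) (ha : 0 ≤ a) (hb : 0 ≤ b) (hc : 0 ≤ c) (hd : 0 ≤ d)
    (hr : 0 < r) (hp : a * d = c * b) :
    Real.sqrt ((a / r + b * r) * (c / r + d * r)) =
      Real.sqrt (a * c) / r + Real.sqrt (b * d) * r := by
  have e1 : Real.sqrt (a*c) * Real.sqrt (a*c) = a*c := Real.mul_self_sqrt (by positivity)
  have e2 : Real.sqrt (b*d) * Real.sqrt (b*d) = b*d := Real.mul_self_sqrt (by positivity)
  have e3 : Real.sqrt (a*c) * Real.sqrt (b*d) = a*d := by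
    rw [← Real.sqrt_mul (by positivity)]
    have h4 : a*c*(b*d) = (a*d)*(a*d) := by linear_combination (-(a*d))*hp
    rw [h4, Real.sqrt_mul_self (by positivity)]
  have hr' : r ≠ 0 := ne_of_gt hr
  have hprod : (a / r + b * r) * (c / r + d * r) =
      (Real.sqrt (a*c) / r + Real.sqrt (b*d) * r)^2 := by
    have hinv : r * r⁻¹ = 1 := mul_inv_cancel₀ hr'
    linear_combination (-(1/r^2)) * e1 + (-(r^2)) * e2 + (-2 : ℝ) * e3 + (-1 : ℝ) * hp +
      (a*d + b*c - 2*Real.sqrt (a*c)*Real.sqrt (b*d)) * hinv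
  rw [hprod, Real.sqrt_sq (by positivity)]

lemma inf_lin (A B : ℝ) (hA : 0 ≤ A) (hB : 0 ≤ B) :
    sInf {x : ℝ | ∃ r : ℝ, 0 < r ∧ x = A / r + B * r} = 2 * Real.sqrt (A * B) := by
  apply csInf_eq_of_forall_ge_of_forall_gt_exists_lt
  · exact ⟨A / 1 + B * 1, 1, one_pos, rfl⟩
  · rintro x ⟨r, hr, rfl⟩
    have h1 : Real.sqrt (A/r) * Real.sqrt (B*r) = Real.sqrt (A*B) := by
      rw [← Real.sqrt_mul (by positivity)]
      congr 1
      field_simp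
    nlinarith [sq_nonneg (Real.sqrt (A/r) - Real.sqrt (B*r)),
      Real.sq_sqrt (show (0:ℝ) ≤ A/r by positivity),
      Real.sq_sqrt (show (0:ℝ) ≤ B*r by positivity), h1]
  · intro w hw
    rcases eq_or_lt_of_le hA with hA' | hA'
    · have hs0 : Real.sqrt (A * B) = 0 := by rw [← hA', zero_mul, Real.sqrt_zero]
      have hw0 : 0 < w := by rw [hs0] at hw; linarith
      rcases eq_or_lt_of_le hB with hB' | hB'
      · refine ⟨A / 1 + B * 1, ⟨1, one_pos, rfl⟩, ?_⟩
        rw [← hA', ← hB']; norm_num; exact hw0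
      · refine ⟨A / (w/(2*B)) + B * (w/(2*B)), ⟨w/(2*B), by positivity, rfl⟩, ?_⟩
        rw [← hA']
        have : B * (w / (2*B)) = w/2 := by field_simp
        rw [this]
        simp
        linarith
    · rcases eq_or_lt_of_le hB with hB' | hB'
      · have hs0 : Real.sqrt (A * B) = 0 := by rw [← hB', mul_zero, Real.sqrt_zero]
        have hw0 : 0 < w := by rw [hs0] at hw; linarith
        refine ⟨A / (2*A/w) + B * (2*A/w), ⟨2*A/w, by positivity, rfl⟩, ?_⟩
        rw [← hB']
        have : A / (2*A/w) = w/2 := by field_simp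
        rw [this]
        simp
        linarith
      · set u := Real.sqrt A with hu
        set v := Real.sqrt B with hv
        have hu0 : 0 < u := Real.sqrt_pos.mpr hA'
        have hv0 : 0 < v := Real.sqrt_pos.mpr hB'
        have hu2 : u^2 = A := Real.sq_sqrt hA
        have hv2 : v^2 = B := Real.sq_sqrt hB
        refine ⟨A / (u/v) + B * (u/v), ⟨u/v, by positivity, rfl⟩, ?_⟩
        have hval : A / (u/v) + B * (u/v) = 2 * Real.sqrt (A * B) := by
          rw [Real.sqrt_mul hA, ← hu, ← hv]
          field_simp
          nlinarith [hu2, hv2]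
        rw [hval]; exact hw

theorem stmt_2 (s t : Fin 4 → ℝ) (hs : ∀ i, 0 ≤ s i) (ht : ∀ i, 0 ≤ t i)
    (h : s 0 * t 0 = s 1 * t 1 ∧ s 1 * t 1 = s 2 * t 2 ∧ s 2 * t 2 = s 3 * t 3) :
    Afun s t = 2 * (s 0 * t 1 * t 2 * s 3) ^ ((1 : ℝ) / 4)
             + 2 * (t 0 * s 1 * s 2 * t 3) ^ ((1 : ℝ) / 4) := by
  obtain ⟨h1, h2, h3⟩ := h
  have hc0 : 0 ≤ s 0 * t 0 := mul_nonneg (hs 0) (ht 0)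
  set A := Real.sqrt (s 0 * s 3) + Real.sqrt (s 1 * s 2) with hA
  set B := Real.sqrt (t 0 * t 3) + Real.sqrt (t 1 * t 2) with hB
  have hA0 : 0 ≤ A := add_nonneg (Real.sqrt_nonneg _) (Real.sqrt_nonneg _)
  have hB0 : 0 ≤ B := add_nonneg (Real.sqrt_nonneg _) (Real.sqrt_nonneg _)
  have key : ∀ r : ℝ, 0 < r →
      Real.sqrt ((s 0 / r + t 3 * r) * (s 3 / r + t 0 * r)) +
      Real.sqrt ((s 1 / r + t 2 * r) * (s 2 / r + t 1 * r)) = A / r + B * r := by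
    intro r hr
    rw [pair_sqrt (s 0) (t 3) (s 3) (t 0) r (hs 0) (ht 3) (hs 3) (ht 0) hr
        (by linarith), pair_sqrt (s 1) (t 2) (s 2) (t 1) r (hs 1) (ht 2) (hs 2) (ht 1) hr
        (by linarith)]
    rw [hA, hB, mul_comm (t 3) (t 0), mul_comm (t 2) (t 1)]
    ring
  have hset : {x : ℝ | ∃ r : ℝ, 0 < r ∧
      x = Real.sqrt ((s 0 / r + t 3 * r) * (s 3 / r + t 0 * r)) +
          Real.sqrt ((s 1 / r + t 2 * r) * (s 2 / r + t 1 * r))} =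
      {x : ℝ | ∃ r : ℝ, 0 < r ∧ x = A / r + B * r} := by
    ext x
    constructor
    · rintro ⟨r, hr, rfl⟩; exact ⟨r, hr, (key r hr)⟩
    · rintro ⟨r, hr, rfl⟩; exact ⟨r, hr, (key r hr).symm⟩
  have hx : 0 ≤ s 0 * t 1 * t 2 * s 3 := by
    have := hs 0; have := ht 1; have := ht 2; have := hs 3; positivity
  have hy : 0 ≤ t 0 * s 1 * s 2 * t 3 := by
    have := ht 0; have := hs 1; have := hs 2; have := ht 3; positivity
  set x := (s 0 * t 1 * t 2 * s 3) ^ ((1:ℝ)/4) with hxdef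
  set y := (t 0 * s 1 * s 2 * t 3) ^ ((1:ℝ)/4) with hydef
  have hx0 : 0 ≤ x := Real.rpow_nonneg hx _
  have hy0 : 0 ≤ y := Real.rpow_nonneg hy _
  have hx2 : x^2 = Real.sqrt (s 0 * t 1 * t 2 * s 3) := by
    rw [hxdef, ← Real.rpow_natCast _ 2, ← Real.rpow_mul hx, Real.sqrt_eq_rpow]
    norm_num
  have hy2 : y^2 = Real.sqrt (t 0 * s 1 * s 2 * t 3) := by
    rw [hydef, ← Real.rpow_natCast _ 2, ← Real.rpow_mul hy, Real.sqrt_eq_rpow]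
    norm_num
  have hxy : x * y = s 0 * t 0 := by
    rw [hxdef, hydef, ← Real.mul_rpow hx hy]
    have q1 : s 1 * t 1 = s 0 * t 0 := h1.symm
    have q2 : s 2 * t 2 = s 0 * t 0 := by linarith
    have q3 : s 3 * t 3 = s 0 * t 0 := by linarith
    have e : s 0 * t 1 * t 2 * s 3 * (t 0 * s 1 * s 2 * t 3) = (s 0 * t 0)^4 := by
      calc s 0 * t 1 * t 2 * s 3 * (t 0 * s 1 * s 2 * t 3)
          = (s 0 * t 0) * ((s 1 * t 1) * ((s 2 * t 2) * (s 3 * t 3))) := by ring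
        _ = (s 0 * t 0)^4 := by rw [q1, q2, q3]; ring
    rw [e, ← Real.rpow_natCast (s 0 * t 0) 4, ← Real.rpow_mul hc0]
    norm_num
  have hAB : A * B = (x + y)^2 := by
    have t14 : Real.sqrt (s 0 * s 3) * Real.sqrt (t 0 * t 3) = s 0 * t 0 := by
      rw [← Real.sqrt_mul (mul_nonneg (hs 0) (hs 3))]
      have q3 : s 3 * t 3 = s 0 * t 0 := by linarith
      have e : s 0 * s 3 * (t 0 * t 3) = (s 0 * t 0) * (s 0 * t 0) := by
        calc s 0 * s 3 * (t 0 * t 3) = (s 0 * t 0) * (s 3 * t 3) := by ring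
          _ = _ := by rw [q3]
      rw [e, Real.sqrt_mul_self hc0]
    have t23 : Real.sqrt (s 1 * s 2) * Real.sqrt (t 1 * t 2) = s 0 * t 0 := by
      rw [← Real.sqrt_mul (mul_nonneg (hs 1) (hs 2))]
      have q1 : s 1 * t 1 = s 0 * t 0 := h1.symm
      have q2 : s 2 * t 2 = s 0 * t 0 := by linarith
      have e : s 1 * s 2 * (t 1 * t 2) = (s 0 * t 0) * (s 0 * t 0) := by
        calc s 1 * s 2 * (t 1 * t 2) = (s 1 * t 1) * (s 2 * t 2) := by ring
          _ = _ := by rw [q1, q2]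
      rw [e, Real.sqrt_mul_self hc0]
    have tx : Real.sqrt (s 0 * s 3) * Real.sqrt (t 1 * t 2) = x^2 := by
      rw [hx2, ← Real.sqrt_mul (mul_nonneg (hs 0) (hs 3))]
      congr 1; ring
    have ty : Real.sqrt (s 1 * s 2) * Real.sqrt (t 0 * t 3) = y^2 := by
      rw [hy2, ← Real.sqrt_mul (mul_nonneg (hs 1) (hs 2))]
      congr 1; ring
    rw [hA, hB]
    linear_combination t14 + t23 + tx + ty - 2 * hxy
  have hsqrtAB : Real.sqrt (A * B) = x + y := by
    rw [hAB, Real.sqrt_sq (by linarith : (0:ℝ) ≤ x + y)]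
  rw [Afun, hset, inf_lin A B hA0 hB0, hsqrtAB]
  ring
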